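/- Let B be an evolution algebra. Then there exists a linear map φ: B → B such that A^(1)(B, φ, b_0, k_0) is an evolution algebra. Specifically, taking any natural basis {u_i} of B, any nonzero x ∈ B, and φ(u_i) = −x u_i for all i, the set {(u_i, 0)} ∪ {(x, 1)} is a natural basis of A^(1)(B, φ, b_0, k_0). -/

import Mathlib

namespace EvolutionAlgebra

variable {K A B : Type*} [Field K] [AddCommGroup A] [Module K A] [AddCommGroup B] [Module K B]

/-- The multiplication of `A¹(B, φ, b₀, k₀) = B × K`:
`(b, λ)(b', λ') = (bb' + λ'φ(b) + λφ(b') + λλ'b₀, λλ'k₀)`. -/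
def a1Mul (mulB : B →ₗ[K] B →ₗ[K] B) (φ : B →ₗ[K] B) (b₀ : B) (k₀ : K) :
    (B × K) →ₗ[K] (B × K) →ₗ[K] (B × K) :=
  LinearMap.mk₂ K
    (fun p q => (mulB p.1 q.1 + q.2 • φ p.1 + p.2 • φ q.1 + (p.2 * q.2) • b₀, p.2 * q.2 * k₀))
    (fun p p' q => by
      simp only [Prod.fst_add, Prod.snd_add, map_add, LinearMap.add_apply, Prod.mk_add_mk,
        Prod.mk.injEq]
      constructor
      · simp only [add_smul, add_mul]; module
      · ring)
    (fun c p q => by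
      simp only [Prod.smul_fst, Prod.smul_snd, map_smul, LinearMap.smul_apply, Prod.smul_mk,
        smul_eq_mul, Prod.mk.injEq]
      constructor
      · simp only [mul_assoc, mul_smul]; module
      · ring)
    (fun p q q' => by
      simp only [Prod.fst_add, Prod.snd_add, map_add, LinearMap.add_apply, Prod.mk_add_mk,
        Prod.mk.injEq]
      constructor
      · simp only [add_smul, mul_add]; module
      · ring)
    (fun c p q => by
      simp only [Prod.smul_fst, Prod.smul_snd, map_smul, LinearMap.smul_apply, Prod.smul_mk,
        smul_eq_mul, Prod.mk.injEq]
      constructor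
      · simp only [mul_smul]; module
      · ring)

theorem stmt15 {ι : Type*}
    (mulB : B →ₗ[K] B →ₗ[K] B) (hcomm : ∀ x y : B, mulB x y = mulB y x)
    (u : Module.Basis ι K B) (hnat : ∀ i j, i ≠ j → mulB (u i) (u j) = 0)
    (x : B) (hx : x ≠ 0)
    (φ : B →ₗ[K] B) (hφ : ∀ i, φ (u i) = -(mulB x (u i))) (b₀ : B) (k₀ : K) :
    ∃ v : Module.Basis (Option ι) K (B × K),
      (∀ i : ι, v (some i) = (u i, 0)) ∧ v none = (x, 1) ∧
      ∀ i j : Option ι, i ≠ j → a1Mul mulB φ b₀ k₀ (v i) (v j) = 0 := by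
  -- shear automorphism (b, c) ↦ (b + c • x, c)
  let f : (B × K) ≃ₗ[K] (B × K) :=
    LinearEquiv.ofLinear
      (LinearMap.prod
        (LinearMap.fst K B K + (LinearMap.toSpanSingleton K B x).comp (LinearMap.snd K B K))
        (LinearMap.snd K B K))
      (LinearMap.prod
        (LinearMap.fst K B K - (LinearMap.toSpanSingleton K B x).comp (LinearMap.snd K B K))
        (LinearMap.snd K B K))
      (by ext p <;> simp)
      (by ext p <;> simp)
  let v : Module.Basis (Option ι) K (B × K) :=
    ((u.prod (Module.Basis.singleton Unit K)).map f).reindex ((Equiv.optionEquivSumPUnit.{0} ι)).symm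
  have hvs : ∀ i : ι, v (some i) = (u i, 0) := by
    intro i
    simp [v, f, Module.Basis.reindex_apply, Module.Basis.prod_apply, Module.Basis.singleton_apply,
      LinearEquiv.ofLinear_apply]
  have hvn : v none = (x, 1) := by
    simp [v, f, Module.Basis.reindex_apply, Module.Basis.prod_apply, Module.Basis.singleton_apply,
      LinearEquiv.ofLinear_apply]
  refine ⟨v, hvs, hvn, ?_⟩
  have key : ∀ p q : B × K, a1Mul mulB φ b₀ k₀ p q =
      (mulB p.1 q.1 + q.2 • φ p.1 + p.2 • φ q.1 + (p.2 * q.2) • b₀, p.2 * q.2 * k₀) := by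
    intro p q; rfl
  rintro (_|i) (_|j) hij
  · exact absurd rfl hij
  · rw [hvn, hvs, key]
    simp [hφ j]
  · rw [hvn, hvs, key]
    simp [hφ i, hcomm (u i) x]
  · have hij' : i ≠ j := fun h => hij (by rw [h])
    rw [hvs, hvs, key]
    simp [hnat i j hij']

end EvolutionAlgebra
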